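/- With U_h as the erf-profile modified-equation solution of the first-order upwind scheme, for any three distinct mesh sizes h_1 > h_2 > h_3 > 0 the ratio ||U_{h_1} - U_{h_3}|| / ||U_{h_2} - U_{h_3}|| equals (√h_1 - √h_3)/(√h_2 - √h_3); consequently σ = 1/2 solves the Richardson extrapolation equation |h_1^σ - h_3^σ|/|h_2^σ - h_3^σ| = ||U_{h_1} - U_{h_3}||/||U_{h_2} - U_{h_3}||, regardless of the ordering of the comparison. -/

import Mathlib

open MeasureTheory Real

noncomputable def erf (ζ : ℝ) : ℝ := (2 / Real.sqrt Real.pi) * ∫ χ in (0:ℝ)..ζ, Real.exp (-χ^2)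

open Filter Topology Set intervalIntegral

private lemma expc : Continuous fun χ : ℝ => Real.exp (-χ ^ 2) := by continuity

private lemma erf_hasDerivAt (z : ℝ) :
    HasDerivAt erf (2 / Real.sqrt Real.pi * Real.exp (-z ^ 2)) z := by
  have h := HasDerivAt.const_mul (2 / Real.sqrt Real.pi)
    (expc.integral_hasStrictDerivAt 0 z).hasDerivAt
  exact h

private lemma erf_sub_erf (u v : ℝ) :
    erf v - erf u = 2 / Real.sqrt Real.pi * ∫ t in u..v, Real.exp (-t ^ 2) := by
  rw [erf, erf, ← mul_sub,
    integral_interval_sub_left (expc.intervalIntegrable 0 v) (expc.intervalIntegrable 0 u)]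

private lemma erf_mono : Monotone erf := by
  intro u v huv
  have h : 0 ≤ erf v - erf u := by
    rw [erf_sub_erf]
    have hnn : (0:ℝ) ≤ ∫ t in u..v, Real.exp (-t ^ 2) :=
      intervalIntegral.integral_nonneg huv (fun x _ => (Real.exp_pos (-x^2)).le)
    positivity
  linarith

private lemma erf_neg (z : ℝ) : erf (-z) = - erf z := by
  have h : (∫ χ in (0:ℝ)..(-z), Real.exp (-χ^2)) = - ∫ χ in (0:ℝ)..z, Real.exp (-χ^2) := by
    have h1 : (∫ x in (0:ℝ)..z, Real.exp (-(-x)^2)) = ∫ x in -z..(-(0:ℝ)), Real.exp (-x^2) :=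
      intervalIntegral.integral_comp_neg (fun x => Real.exp (-x^2))
    simp only [neg_sq, neg_zero] at h1
    rw [intervalIntegral.integral_symm, ← h1]
  rw [erf, erf, h, mul_neg]

private lemma erf_diff_le {u v : ℝ} (h0 : 0 ≤ u) (huv : u ≤ v) :
    erf v - erf u ≤ 2 / Real.sqrt Real.pi * ((v - u) * Real.exp (-u ^ 2)) := by
  rw [erf_sub_erf]
  have hb : (∫ t in u..v, Real.exp (-t ^ 2)) ≤ (v - u) * Real.exp (-u ^ 2) := by
    have := intervalIntegral.integral_mono_on huv (expc.intervalIntegrable u v)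
      (_root_.intervalIntegrable_const (μ := volume) (c := Real.exp (-u ^ 2)))
      (fun t ht => by
        have h1 : u ^ 2 ≤ t ^ 2 := by nlinarith [ht.1, ht.2]
        exact Real.exp_le_exp.2 (by linarith))
    simpa [smul_eq_mul] using this
  have h2 : (0:ℝ) ≤ 2 / Real.sqrt Real.pi := by positivity
  calc 2 / Real.sqrt Real.pi * ∫ t in u..v, Real.exp (-t ^ 2)
      ≤ 2 / Real.sqrt Real.pi * ((v - u) * Real.exp (-u ^ 2)) := by
        exact mul_le_mul_of_nonneg_left hb h2

private noncomputable def G (b c x : ℝ) : ℝ :=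
  x * (erf (x / b) - erf (x / c)) +
    (b * Real.exp (-(x / b) ^ 2) - c * Real.exp (-(x / c) ^ 2)) / Real.sqrt Real.pi

private lemma G_hasDerivAt {b c : ℝ} (hb : 0 < b) (hc : 0 < c) (x : ℝ) :
    HasDerivAt (G b c) (erf (x / b) - erf (x / c)) x := by
  have hdiv : ∀ s : ℝ, HasDerivAt (fun y : ℝ => y / s) (1 / s) x := by
    intro s
    simpa using (hasDerivAt_id x).div_const s
  have herf : ∀ s : ℝ, HasDerivAt (fun y : ℝ => erf (y / s))
      (2 / Real.sqrt Real.pi * Real.exp (-(x / s) ^ 2) * (1 / s)) x := by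
    intro s
    exact (erf_hasDerivAt (x / s)).comp (h₂ := erf) (h := fun y => y / s) x (hdiv s)
  have hexp : ∀ s : ℝ, HasDerivAt (fun y : ℝ => Real.exp (-(y / s) ^ 2))
      (Real.exp (-(x / s) ^ 2) * -(2 * (x / s) ^ 1 * (1 / s))) x := by
    intro s
    exact (((hdiv s).pow 2).neg).exp
  have h1 : HasDerivAt (fun y : ℝ => y * (erf (y / b) - erf (y / c)))
      (1 * (erf (x / b) - erf (x / c)) + x *
        (2 / Real.sqrt Real.pi * Real.exp (-(x / b) ^ 2) * (1 / b) -
         2 / Real.sqrt Real.pi * Real.exp (-(x / c) ^ 2) * (1 / c))) x :=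
    (hasDerivAt_id x).mul ((herf b).sub (herf c))
  have h2 : HasDerivAt (fun y : ℝ =>
      (b * Real.exp (-(y / b) ^ 2) - c * Real.exp (-(y / c) ^ 2)) / Real.sqrt Real.pi)
      ((b * (Real.exp (-(x / b) ^ 2) * -(2 * (x / b) ^ 1 * (1 / b))) -
        c * (Real.exp (-(x / c) ^ 2) * -(2 * (x / c) ^ 1 * (1 / c)))) / Real.sqrt Real.pi) x :=
    ((HasDerivAt.const_mul b (hexp b)).sub (HasDerivAt.const_mul c (hexp c))).div_const _
  have h := h1.add h2
  have hπ : Real.sqrt Real.pi ≠ 0 := by positivity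
  convert h using 1
  · rfl
  · rfl
  · rfl
  field_simp
  ring

private lemma G_tendsto {b c : ℝ} (hb : 0 < b) (hbc : b ≤ c) :
    Tendsto (G b c) atTop (𝓝 0) := by
  have hc : 0 < c := lt_of_lt_of_le hb hbc
  -- second summand tends to 0
  have hsq : ∀ s : ℝ, 0 < s → Tendsto (fun x : ℝ => (x / s) ^ 2) atTop atTop := by
    intro s hs
    exact (tendsto_pow_atTop two_ne_zero).comp (tendsto_id.atTop_div_const hs)
  have hexp0 : ∀ s : ℝ, 0 < s →
      Tendsto (fun x : ℝ => Real.exp (-(x / s) ^ 2)) atTop (𝓝 0) := by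
    intro s hs
    exact Real.tendsto_exp_atBot.comp (tendsto_neg_atBot_iff.2 (hsq s hs))
  have h2 : Tendsto (fun x : ℝ =>
      (b * Real.exp (-(x / b) ^ 2) - c * Real.exp (-(x / c) ^ 2)) / Real.sqrt Real.pi)
      atTop (𝓝 0) := by
    have := (((hexp0 b hb).const_mul b).sub ((hexp0 c hc).const_mul c)).div_const
      (Real.sqrt Real.pi)
    simpa using this
  -- first summand: squeeze
  have hub : Tendsto (fun x : ℝ =>
      2 / Real.sqrt Real.pi * (1 / b - 1 / c) * (c ^ 2 * ((x / c) ^ 2 * Real.exp (-(x / c) ^ 2))))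
      atTop (𝓝 0) := by
    have hpow : Tendsto (fun x : ℝ => (x / c) ^ 2 * Real.exp (-(x / c) ^ 2)) atTop (𝓝 0) := by
      have h := (tendsto_pow_mul_exp_neg_atTop_nhds_zero 1).comp (hsq c hc)
      simpa [Function.comp_def] using h
    have := (hpow.const_mul (c ^ 2)).const_mul (2 / Real.sqrt Real.pi * (1 / b - 1 / c))
    simpa using this
  have h1 : Tendsto (fun x : ℝ => x * (erf (x / b) - erf (x / c))) atTop (𝓝 0) := by
    apply tendsto_of_tendsto_of_tendsto_of_le_of_le' tendsto_const_nhds hub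
    · filter_upwards [eventually_ge_atTop (0:ℝ)] with x hx
      have hdd : x / c ≤ x / b := by gcongr
      exact mul_nonneg hx (by linarith [erf_mono hdd])
    · filter_upwards [eventually_ge_atTop (0:ℝ)] with x hx
      have hxc : 0 ≤ x / c := by positivity
      have hdd : x / c ≤ x / b := by gcongr
      have hle := erf_diff_le hxc hdd
      have hkey : x * (erf (x / b) - erf (x / c)) ≤
          x * (2 / Real.sqrt Real.pi * ((x / b - x / c) * Real.exp (-(x / c) ^ 2))) :=
        mul_le_mul_of_nonneg_left hle hx
      calc x * (erf (x / b) - erf (x / c))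
          ≤ x * (2 / Real.sqrt Real.pi * ((x / b - x / c) * Real.exp (-(x / c) ^ 2))) := hkey
        _ = 2 / Real.sqrt Real.pi * (1 / b - 1 / c) *
            (c ^ 2 * ((x / c) ^ 2 * Real.exp (-(x / c) ^ 2))) := by
            field_simp
  have := h1.add h2
  simpa using (show Tendsto (G b c) atTop (𝓝 (0 + 0)) from this)

private lemma key_Ioi {b c : ℝ} (hb : 0 < b) (hbc : b ≤ c) :
    ∫ x in Ioi (0:ℝ), (erf (x / b) - erf (x / c)) = (c - b) / Real.sqrt Real.pi := by
  have hc : 0 < c := lt_of_lt_of_le hb hbc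
  have h := integral_Ioi_of_hasDerivAt_of_nonneg' (g := G b c)
    (fun x _ => G_hasDerivAt hb hc x)
    (fun x hx => by
      have hdd : x / c ≤ x / b := by
        have hx' : (0:ℝ) ≤ x := (le_of_lt hx)
        gcongr
      linarith [erf_mono hdd])
    (G_tendsto hb hbc)
  have h0 : erf 0 = 0 := by simp [erf]
  have hG0 : G b c 0 = (b - c) / Real.sqrt Real.pi := by simp [G, h0]
  rw [h, hG0]
  ring

private lemma key {b c : ℝ} (hb : 0 < b) (hbc : b ≤ c) :
    ∫ x : ℝ, |erf (x / b) - erf (x / c)| = 2 * ((c - b) / Real.sqrt Real.pi) := by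
  have hc : 0 < c := lt_of_lt_of_le hb hbc
  have heven : ∀ x : ℝ, |erf (|x| / b) - erf (|x| / c)| = |erf (x / b) - erf (x / c)| := by
    intro x
    rcases le_or_gt 0 x with hx | hx
    · rw [abs_of_nonneg hx]
    · rw [abs_of_neg hx, neg_div, neg_div, erf_neg, erf_neg,
        show -erf (x / b) - -erf (x / c) = -(erf (x / b) - erf (x / c)) by ring, abs_neg]
  calc ∫ x : ℝ, |erf (x / b) - erf (x / c)|
      = ∫ x : ℝ, |erf (|x| / b) - erf (|x| / c)| := by
        exact integral_congr_ae (Filter.Eventually.of_forall fun x => (heven x).symm)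
    _ = 2 * ∫ x in Ioi (0:ℝ), |erf (x / b) - erf (x / c)| :=
        integral_comp_abs (f := fun y => |erf (y / b) - erf (y / c)|)
    _ = 2 * ∫ x in Ioi (0:ℝ), (erf (x / b) - erf (x / c)) := by
        congr 1
        refine setIntegral_congr_fun measurableSet_Ioi (fun x hx => ?_)
        have hdd : x / c ≤ x / b := by
          have hx' : (0:ℝ) ≤ x := le_of_lt hx
          gcongr
        exact abs_of_nonneg (by linarith [erf_mono hdd])
    _ = 2 * ((c - b) / Real.sqrt Real.pi) := by rw [key_Ioi hb hbc]

theorem stmt7 (a tf lam uL uR : ℝ) (ha : 0 < a) (htf : 0 < tf)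
    (hl0 : 0 < lam) (hl1 : lam < 1) (huLR : uL ≠ uR)
    (ν : ℝ → ℝ) (hν : ∀ h, ν h = a * h * (1 - lam) / 2)
    (U : ℝ → ℝ → ℝ)
    (hU : ∀ h x, U h x = (uL + uR)/2 + (uR - uL)/2 * erf ((x - a*tf)/Real.sqrt (4 * ν h * tf)))
    (h1 h2 h3 : ℝ) (h3p : 0 < h3) (h32 : h3 < h2) (h21 : h2 < h1) :
    (∫ x : ℝ, |U h1 x - U h3 x|) / (∫ x : ℝ, |U h2 x - U h3 x|) =
        (Real.sqrt h1 - Real.sqrt h3) / (Real.sqrt h2 - Real.sqrt h3) ∧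
    |h1 ^ ((1:ℝ)/2) - h3 ^ ((1:ℝ)/2)| / |h2 ^ ((1:ℝ)/2) - h3 ^ ((1:ℝ)/2)| =
      (∫ x : ℝ, |U h1 x - U h3 x|) / (∫ x : ℝ, |U h2 x - U h3 x|) := by
  set C := Real.sqrt (2 * a * tf * (1 - lam)) with hC
  have h1l : (0:ℝ) < 1 - lam := by linarith
  have hprod : (0:ℝ) < 2 * a * tf * (1 - lam) := by nlinarith [mul_pos (mul_pos ha htf) h1l]
  have hCpos : 0 < C := Real.sqrt_pos.2 hprod
  have hsq : ∀ h : ℝ, 0 < h → Real.sqrt (4 * ν h * tf) = C * Real.sqrt h := by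
    intro h hh
    rw [hν, show 4 * (a * h * (1 - lam) / 2) * tf = 2 * a * tf * (1 - lam) * h by ring,
      Real.sqrt_mul hprod.le h]
  have hK : ∀ hh hh' : ℝ, 0 < hh' → hh' ≤ hh →
      (∫ x : ℝ, |U hh x - U hh' x|) =
        |uR - uL| / 2 * (2 * ((C * Real.sqrt hh - C * Real.sqrt hh') / Real.sqrt Real.pi)) := by
    intro hh hh' hp hle
    have hb : 0 < C * Real.sqrt hh' := by positivity
    have hbc : C * Real.sqrt hh' ≤ C * Real.sqrt hh :=
      mul_le_mul_of_nonneg_left (Real.sqrt_le_sqrt hle) hCpos.le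
    have hpt : ∀ x : ℝ, |U hh x - U hh' x| =
        |uR - uL| / 2 * |erf ((x - a*tf) / (C * Real.sqrt hh')) -
          erf ((x - a*tf) / (C * Real.sqrt hh))| := by
      intro x
      rw [hU, hU, hsq hh (lt_of_lt_of_le hp hle), hsq hh' hp]
      rw [show (uL + uR)/2 + (uR - uL)/2 * erf ((x - a*tf)/(C * Real.sqrt hh)) -
          ((uL + uR)/2 + (uR - uL)/2 * erf ((x - a*tf)/(C * Real.sqrt hh'))) =
          (uR - uL)/2 * (erf ((x - a*tf)/(C * Real.sqrt hh)) -
           erf ((x - a*tf)/(C * Real.sqrt hh'))) by ring]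
      rw [abs_mul, abs_div, abs_two,
        abs_sub_comm (erf ((x - a*tf)/(C * Real.sqrt hh))) (erf ((x - a*tf)/(C * Real.sqrt hh')))]
    calc (∫ x : ℝ, |U hh x - U hh' x|)
        = ∫ x : ℝ, |uR - uL| / 2 * |erf ((x - a*tf) / (C * Real.sqrt hh')) -
            erf ((x - a*tf) / (C * Real.sqrt hh))| :=
          integral_congr_ae (Filter.Eventually.of_forall hpt)
      _ = |uR - uL| / 2 * ∫ x : ℝ, |erf ((x - a*tf) / (C * Real.sqrt hh')) -
            erf ((x - a*tf) / (C * Real.sqrt hh))| := MeasureTheory.integral_const_mul _ _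
      _ = |uR - uL| / 2 * ∫ x : ℝ, |erf (x / (C * Real.sqrt hh')) -
            erf (x / (C * Real.sqrt hh))| := by
          rw [integral_sub_right_eq_self
            (fun y => |erf (y / (C * Real.sqrt hh')) - erf (y / (C * Real.sqrt hh))|) (a*tf)]
      _ = |uR - uL| / 2 * (2 * ((C * Real.sqrt hh - C * Real.sqrt hh') / Real.sqrt Real.pi)) := by
          rw [key hb hbc]
  have hne : |uR - uL| ≠ 0 := by
    simp only [ne_eq, abs_eq_zero, sub_eq_zero]
    exact fun h => huLR h.symm
  have hπ : (0:ℝ) < Real.sqrt Real.pi := by positivity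
  have hs13 : Real.sqrt h3 < Real.sqrt h1 := Real.sqrt_lt_sqrt h3p.le (by linarith)
  have hs23 : Real.sqrt h3 < Real.sqrt h2 := Real.sqrt_lt_sqrt h3p.le h32
  have e1 := hK h1 h3 h3p (by linarith)
  have e2 := hK h2 h3 h3p (by linarith)
  have hfrac : (∫ x : ℝ, |U h1 x - U h3 x|) / (∫ x : ℝ, |U h2 x - U h3 x|) =
      (Real.sqrt h1 - Real.sqrt h3) / (Real.sqrt h2 - Real.sqrt h3) := by
    rw [e1, e2]
    rw [show |uR - uL| / 2 * (2 * ((C * Real.sqrt h1 - C * Real.sqrt h3) / Real.sqrt Real.pi)) =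
        (|uR - uL| * C / Real.sqrt Real.pi) * (Real.sqrt h1 - Real.sqrt h3) by ring,
      show |uR - uL| / 2 * (2 * ((C * Real.sqrt h2 - C * Real.sqrt h3) / Real.sqrt Real.pi)) =
        (|uR - uL| * C / Real.sqrt Real.pi) * (Real.sqrt h2 - Real.sqrt h3) by ring]
    rw [mul_div_mul_left]
    positivity
  refine ⟨hfrac, ?_⟩
  rw [hfrac]
  rw [← Real.sqrt_eq_rpow, ← Real.sqrt_eq_rpow, ← Real.sqrt_eq_rpow,
    abs_of_pos (by linarith), abs_of_pos (by linarith)]
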